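/- For real numbers a, b with a ≥ |b| > 0, the integral ∫₀^π log(a + b cos θ) dθ equals π log((a + √(a² − b²))/2). -/

import Mathlib

set_option maxHeartbeats 1000000

open Real MeasureTheory intervalIntegral

lemma log_ii_01 : IntervalIntegrable Real.log volume 0 1 := by
  have hg : IntervalIntegrable (fun x : ℝ => 2 * x ^ (-(2⁻¹:ℝ))) volume 0 1 :=
    (intervalIntegrable_rpow' (by norm_num)).const_mul 2
  refine hg.mono_fun' Real.measurable_log.aestronglyMeasurable ?_
  filter_upwards [ae_restrict_mem measurableSet_uIoc] with x hx
  rw [Set.uIoc_of_le (by norm_num : (0:ℝ) ≤ 1)] at hx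
  obtain ⟨hx0, hx1⟩ := hx
  have h1 : Real.log x ≤ 0 := Real.log_nonpos (le_of_lt hx0) hx1
  have h2 : Real.log (x ^ (-(2⁻¹:ℝ))) ≤ x ^ (-(2⁻¹:ℝ)) - 1 :=
    Real.log_le_sub_one_of_pos (Real.rpow_pos_of_pos hx0 _)
  rw [Real.log_rpow hx0] at h2
  have h3 : (0:ℝ) < x ^ (-(2⁻¹:ℝ)) := Real.rpow_pos_of_pos hx0 _
  simp only [Real.norm_eq_abs, abs_of_nonpos h1]
  nlinarith

lemma log_ii (c : ℝ) (hc : 0 < c) : IntervalIntegrable Real.log volume 0 c := by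
  rcases le_total c 1 with h | h
  · exact log_ii_01.mono_set (by rw [Set.uIcc_of_le hc.le, Set.uIcc_of_le (by norm_num : (0:ℝ) ≤ 1)]; exact Set.Icc_subset_Icc le_rfl h)
  · exact log_ii_01.trans (intervalIntegrable_log (by simp [Set.uIcc_of_le h]))

lemma ii_one_sub : IntervalIntegrable (fun θ => Real.log (1 - Real.cos θ)) volume 0 π := by
  have hg : IntervalIntegrable (fun θ : ℝ => Real.log 2 + 2 * Real.log π - 2 * Real.log θ)
      volume 0 π :=
    (_root_.intervalIntegrable_const).sub ((log_ii π Real.pi_pos).const_mul 2)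
  refine hg.mono_fun' ?_ ?_
  · exact (Real.measurable_log.comp (measurable_const.sub Real.measurable_cos)).aestronglyMeasurable
  filter_upwards [ae_restrict_mem measurableSet_uIoc] with θ hθ
  rw [Set.uIoc_of_le Real.pi_pos.le] at hθ
  obtain ⟨hθ0, hθπ⟩ := hθ
  -- lower bound sin(θ/2) ≥ θ/π
  have hs : θ / π ≤ Real.sin (θ / 2) := by
    have := Real.mul_le_sin (x := θ/2) (by linarith) (by linarith)
    calc θ / π = 2 / π * (θ / 2) := by field_simp
    _ ≤ Real.sin (θ/2) := this
  have hθπ' : 0 < θ / π := div_pos hθ0 Real.pi_pos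
  have hlow : 2 * (θ/π)^2 ≤ 1 - Real.cos θ := by
    have hcos : Real.cos θ = 1 - 2 * Real.sin (θ/2) ^ 2 := by
      have hd : Real.cos (2 * (θ/2)) = 2 * Real.cos (θ/2)^2 - 1 := Real.cos_two_mul _
      rw [show 2 * (θ/2) = θ by ring] at hd
      nlinarith [Real.sin_sq_add_cos_sq (θ/2)]
    nlinarith [hs, hθπ'.le]
  have hpos : 0 < 1 - Real.cos θ := lt_of_lt_of_le (by positivity) hlow
  have hup : 1 - Real.cos θ ≤ 2 := by nlinarith [Real.neg_one_le_cos θ]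
  have hlogθ : Real.log θ ≤ Real.log π := Real.log_le_log hθ0 hθπ
  have hl : Real.log 2 + 2 * Real.log θ - 2 * Real.log π ≤ Real.log (1 - Real.cos θ) := by
    have : Real.log (2 * (θ/π)^2) ≤ Real.log (1 - Real.cos θ) :=
      Real.log_le_log (by positivity) hlow
    rw [Real.log_mul (by norm_num) (by positivity), Real.log_pow, Real.log_div hθ0.ne' Real.pi_pos.ne'] at this
    push_cast at this
    linarith
  have hu : Real.log (1 - Real.cos θ) ≤ Real.log 2 := Real.log_le_log hpos hup
  rw [Real.norm_eq_abs, abs_le]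
  constructor <;> nlinarith [Real.log_pos (by norm_num : (1:ℝ) < 2)]

lemma ae_ne_pi : ∀ᵐ (θ : ℝ) ∂(volume.restrict (Set.uIoc (0:ℝ) π)), θ ≠ π := by
  refine ae_restrict_of_ae ?_
  rw [MeasureTheory.ae_iff]
  have h : {a : ℝ | ¬ a ≠ π} = {π} := by ext x; simp
  rw [h]; exact measure_singleton _

lemma ii_one_add : IntervalIntegrable (fun θ => Real.log (1 + Real.cos θ)) volume 0 π := by
  have h := ii_one_sub.comp_sub_left π
  simp only [Real.cos_pi_sub, sub_neg_eq_add, sub_zero, sub_self] at h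
  exact h.symm

lemma ii_gen {k : ℝ} (hk : |k| ≤ 1) :
    IntervalIntegrable (fun θ => Real.log (1 + k^2 + 2*k*Real.cos θ)) volume 0 π := by
  have habs : ∀ x : ℝ, -(2*|k|) ≤ 2*k*Real.cos x ∧ 2*k*Real.cos x ≤ 2*|k| := by
    intro x
    have h1 : |2*k*Real.cos x| ≤ 2*|k| := by
      rw [abs_mul, abs_mul, abs_two]
      nlinarith [Real.abs_cos_le_one x, abs_nonneg k]
    exact abs_le.mp h1
  rcases lt_or_eq_of_le hk with hk1 | hk1
  · refine IntervalIntegrable.log (by fun_prop) ?_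
    intro x _
    have := (habs x).1
    nlinarith [abs_nonneg k, sq_abs k]
  · rcases (abs_eq (by norm_num : (0:ℝ) ≤ 1)).mp hk1 with rfl | rfl
    · refine ((_root_.intervalIntegrable_const (c := Real.log 2)).add ii_one_add).congr_ae ?_
      filter_upwards [ae_ne_pi, ae_restrict_mem measurableSet_uIoc] with θ hθ hmem
      have h1 : 0 < 1 + Real.cos θ := by
        rcases lt_or_eq_of_le (Real.neg_one_le_cos θ) with h | h
        · linarith
        · exfalso; apply hθ
          rw [Set.uIoc_of_le Real.pi_pos.le] at hmem
          have h2 : Real.cos (π - θ) = 1 := by rw [Real.cos_pi_sub, ← h]; ring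
          have h3 := (Real.cos_eq_one_iff_of_lt_of_lt (x := π - θ)
            (by nlinarith [Real.pi_pos, hmem.2]) (by nlinarith [Real.pi_pos, hmem.1])).mp h2
          linarith
      rw [show (1:ℝ) + 1^2 + 2*1*Real.cos θ = 2 * (1 + Real.cos θ) by ring,
        Real.log_mul (by norm_num) h1.ne']
    · refine ((_root_.intervalIntegrable_const (c := Real.log 2)).add ii_one_sub).congr_ae ?_
      filter_upwards [ae_restrict_mem measurableSet_uIoc] with θ hmem
      rw [Set.uIoc_of_le Real.pi_pos.le] at hmem
      have h1 : 0 < 1 - Real.cos θ := by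
        rcases lt_or_eq_of_le (Real.cos_le_one θ) with h | h
        · linarith
        · exfalso
          have := Real.cos_eq_one_iff_of_lt_of_lt (x := θ) (by linarith [hmem.1, Real.pi_pos]) (by linarith [hmem.2, Real.pi_pos])
          have h0 := this.mp h
          linarith [hmem.1]
      rw [show (1:ℝ) + (-1)^2 + 2*(-1)*Real.cos θ = 2 * (1 - Real.cos θ) by ring,
        Real.log_mul (by norm_num) h1.ne']

noncomputable def Ik (k : ℝ) : ℝ := ∫ θ in (0:ℝ)..π, Real.log (1 + k^2 + 2*k*Real.cos θ)

lemma abs_cos_lt_one {θ : ℝ} (h0 : 0 < θ) (hπ : θ < π) : |Real.cos θ| < 1 := by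
  have hpi := Real.pi_pos
  rw [abs_lt]
  constructor
  · rcases lt_or_eq_of_le (Real.neg_one_le_cos θ) with h | h
    · exact h
    · exfalso
      have h2 : Real.cos (π - θ) = 1 := by rw [Real.cos_pi_sub, ← h]; ring
      have h3 := (Real.cos_eq_one_iff_of_lt_of_lt (x := π - θ)
        (by nlinarith) (by nlinarith)).mp h2
      linarith
  · rcases lt_or_eq_of_le (Real.cos_le_one θ) with h | h
    · exact h
    · exfalso
      have h3 := (Real.cos_eq_one_iff_of_lt_of_lt (x := θ)
        (by nlinarith) (by nlinarith)).mp h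
      linarith

lemma ae_ne_pi' : ∀ᵐ (θ : ℝ), θ ≠ π := by
  rw [MeasureTheory.ae_iff]
  have h : {a : ℝ | ¬ a ≠ π} = {π} := by ext x; simp
  rw [h]; exact measure_singleton _

lemma Ik_neg (k : ℝ) : Ik (-k) = Ik k := by
  unfold Ik
  have h := intervalIntegral.integral_comp_sub_left (a := 0) (b := π)
    (fun θ => Real.log (1 + k^2 + 2*k*Real.cos θ)) π
  simp only [sub_zero, sub_self, Real.cos_pi_sub] at h
  rw [← h]
  refine intervalIntegral.integral_congr fun θ _ => ?_
  ring_nf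

lemma Ik_sq {k : ℝ} (hk : |k| ≤ 1) : 2 * Ik k = Ik (k^2) := by
  have i1 := ii_gen hk
  have i2 := ii_gen (k := -k) (by rwa [abs_neg])
  have hk2 : |(-(k^2))| ≤ 1 := by
    rw [abs_neg, abs_pow]
    exact pow_le_one₀ (abs_nonneg k) hk
  have i3 := ii_gen hk2
  set g : ℝ → ℝ := fun θ => Real.log (1 + (-(k^2))^2 + 2*(-(k^2))*Real.cos θ) with hg
  -- step 1
  have step1 : Ik k + Ik (-k) = ∫ θ in (0:ℝ)..π, g (2*θ) := by
    unfold Ik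
    rw [← intervalIntegral.integral_add i1 i2]
    refine intervalIntegral.integral_congr_ae ?_
    filter_upwards [ae_ne_pi'] with θ hne hmem
    rw [Set.uIoc_of_le Real.pi_pos.le] at hmem
    have hcos := abs_cos_lt_one hmem.1 (lt_of_le_of_ne hmem.2 hne)
    have hA : 0 < 1 + k^2 + 2*k*Real.cos θ := by
      rcases eq_or_ne k 0 with rfl | hk0
      · norm_num
      · have hu : 0 < |k| := abs_pos.mpr hk0
        have h4 : -(|k| * |Real.cos θ|) ≤ k * Real.cos θ := by
          rw [← abs_mul]; exact neg_abs_le _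
        nlinarith [sq_abs k, sq_nonneg (1 - |k|), mul_pos hu (sub_pos.mpr hcos)]
    have hB : 0 < 1 + (-k)^2 + 2*(-k)*Real.cos θ := by
      rcases eq_or_ne k 0 with rfl | hk0
      · norm_num
      · have hu : 0 < |k| := abs_pos.mpr hk0
        have h4 : k * Real.cos θ ≤ |k| * |Real.cos θ| := by
          rw [← abs_mul]; exact le_abs_self _
        nlinarith [sq_abs k, sq_nonneg (1 - |k|), mul_pos hu (sub_pos.mpr hcos)]
    rw [hg]
    have harg : (1 + k^2 + 2*k*Real.cos θ) * (1 + (-k)^2 + 2*(-k)*Real.cos θ)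
        = 1 + (-(k^2))^2 + 2*(-(k^2))*Real.cos (2*θ) := by
      rw [Real.cos_two_mul]; ring
    rw [← Real.log_mul hA.ne' hB.ne', harg]
  -- step 2 : substitution
  have step2 : ∫ θ in (0:ℝ)..π, g (2*θ) = (2:ℝ)⁻¹ • ∫ θ in (0:ℝ)..(2*π), g θ := by
    have := intervalIntegral.integral_comp_mul_left (a := 0) (b := π) (c := 2) g (by norm_num)
    simpa using this
  -- integrability on π..2π
  have hfun : (fun x => g (2*π - x)) = g := by
    funext x; rw [hg]; simp [Real.cos_two_pi_sub]
  have i4 : IntervalIntegrable g volume π (2*π) := by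
    have h := i3.comp_sub_left (2*π)
    rw [hfun, show 2*π - 0 = 2*π by ring, show 2*π - π = π by ring] at h
    exact h.symm
  -- step 3/4 : ∫ π..2π g = ∫ 0..π g
  have step4 : ∫ θ in π..(2*π), g θ = ∫ θ in (0:ℝ)..π, g θ := by
    have h := intervalIntegral.integral_comp_sub_left (a := 0) (b := π) g (2*π)
    rw [show (2*π - π) = π by ring, show (2*π - 0) = 2*π by ring] at h
    simp only [hfun] at h
    exact h.symm
  have step3 : ∫ θ in (0:ℝ)..(2*π), g θ = (∫ θ in (0:ℝ)..π, g θ) + ∫ θ in π..(2*π), g θ :=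
    (intervalIntegral.integral_add_adjacent_intervals i3 i4).symm
  have step5 : (∫ θ in (0:ℝ)..π, g θ) = Ik (k^2) := by
    rw [hg]
    exact Ik_neg (k^2)
  have hIkneg : Ik (-k) = Ik k := Ik_neg k
  rw [hIkneg] at step1
  rw [step2, step3, step4, step5] at step1
  rw [show (2:ℝ)⁻¹ • (Ik (k^2) + Ik (k^2)) = Ik (k^2) by rw [smul_eq_mul]; ring] at step1
  linarith



lemma Ik_bound {k : ℝ} (hk : |k| < 1) : |Ik k| ≤ (2 * -Real.log (1 - |k|)) * π := by
  have hk0 := abs_nonneg k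
  have h1k : 0 < 1 - |k| := by linarith
  unfold Ik
  have := intervalIntegral.norm_integral_le_of_norm_le_const
    (C := 2 * -Real.log (1 - |k|)) (f := fun θ => Real.log (1 + k^2 + 2*k*Real.cos θ))
    (a := 0) (b := π) ?_
  · rw [Real.norm_eq_abs] at this
    calc |∫ θ in (0:ℝ)..π, Real.log (1 + k^2 + 2*k*Real.cos θ)|
        ≤ 2 * -Real.log (1 - |k|) * |π - 0| := this
      _ = (2 * -Real.log (1 - |k|)) * π := by rw [sub_zero, abs_of_pos Real.pi_pos]
  · intro x _
    have hcb : |Real.cos x| ≤ 1 := Real.abs_cos_le_one x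
    have h4 : -(|k| * |Real.cos x|) ≤ k * Real.cos x ∧ k * Real.cos x ≤ |k| * |Real.cos x| := by
      rw [← abs_mul]; exact ⟨neg_abs_le _, le_abs_self _⟩
    have hlow : (1 - |k|)^2 ≤ 1 + k^2 + 2*k*Real.cos x := by
      nlinarith [sq_abs k, mul_nonneg hk0 (abs_nonneg (Real.cos x))]
    have hup : 1 + k^2 + 2*k*Real.cos x ≤ (1 + |k|)^2 := by
      nlinarith [sq_abs k, mul_nonneg hk0 (abs_nonneg (Real.cos x))]
    have hlog1 : 2 * Real.log (1 - |k|) ≤ Real.log (1 + k^2 + 2*k*Real.cos x) := by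
      have := Real.log_le_log (pow_pos h1k 2) hlow
      rwa [Real.log_pow, Nat.cast_ofNat] at this
    have hlog2 : Real.log (1 + k^2 + 2*k*Real.cos x) ≤ 2 * Real.log (1 + |k|) := by
      have := Real.log_le_log (lt_of_lt_of_le (pow_pos h1k 2) hlow) hup
      rwa [Real.log_pow, Nat.cast_ofNat] at this
    have hkey : Real.log (1 + |k|) ≤ -Real.log (1 - |k|) := by
      have hmul : Real.log ((1 + |k|) * (1 - |k|)) ≤ 0 := by
        apply Real.log_nonpos (by positivity)
        nlinarith [sq_nonneg |k|]
      rw [Real.log_mul (by positivity) h1k.ne'] at hmul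
      linarith
    rw [Real.norm_eq_abs, abs_le]
    constructor <;> linarith

lemma Ik_zero_of_lt {k : ℝ} (hk : |k| < 1) : Ik k = 0 := by
  have hk0 := abs_nonneg k
  have h1k : 0 < 1 - |k| := by linarith
  set C : ℝ := (2 * -Real.log (1 - |k|)) * π with hC
  have hL : 0 ≤ -Real.log (1 - |k|) := by
    have : Real.log (1 - |k|) ≤ 0 := Real.log_nonpos h1k.le (by linarith)
    linarith
  have hCpos : 0 ≤ C := by
    rw [hC]; exact mul_nonneg (by linarith) Real.pi_pos.le
  have key : ∀ n : ℕ, Ik k = Ik (k ^ 2^n) / 2^n := by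
    intro n
    induction n with
    | zero => simp
    | succ n ih =>
      have h1 : |k ^ 2^n| ≤ 1 := by rw [abs_pow]; exact pow_le_one₀ hk0 hk.le
      have h2 := Ik_sq h1
      rw [← pow_mul, show 2^n * 2 = 2^(n+1) by rw [pow_succ]] at h2
      rw [ih, ← h2]
      have h2n : ((2:ℝ))^n ≠ 0 := (pow_pos two_pos n).ne'
      field_simp
      ring
  have bound : ∀ n : ℕ, |Ik k| ≤ C / 2^n := by
    intro n
    have hkn : |k ^ 2^n| ≤ |k| := by
      rw [abs_pow]
      exact pow_le_of_le_one hk0 hk.le (Nat.pos_of_ne_zero (by positivity)).ne'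
    have hkn1 : |k ^ 2^n| < 1 := lt_of_le_of_lt hkn hk
    have hb := Ik_bound hkn1
    have hlog : -Real.log (1 - |k ^ 2^n|) ≤ -Real.log (1 - |k|) := by
      have := Real.log_le_log h1k (by linarith : 1 - |k| ≤ 1 - |k ^ 2^n|)
      linarith
    rw [key n, abs_div, abs_of_pos (pow_pos two_pos n : (0:ℝ) < 2^n)]
    gcongr
    calc |Ik (k ^ 2^n)| ≤ (2 * -Real.log (1 - |k ^ 2^n|)) * π := hb
      _ ≤ C := by rw [hC]; have := Real.pi_pos; nlinarith
  rcases eq_or_lt_of_le (abs_nonneg (Ik k)) with h0 | h0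
  · exact abs_eq_zero.mp h0.symm
  · exfalso
    obtain ⟨n, hn⟩ := pow_unbounded_of_one_lt (C / |Ik k|) (by norm_num : (1:ℝ) < 2)
    have hbn := bound n
    rw [div_lt_iff₀ h0] at hn
    have h2n : (0:ℝ) < 2^n := pow_pos two_pos n
    rw [le_div_iff₀ h2n] at hbn
    nlinarith

lemma Ik_one : Ik 1 = 0 := by
  have h := Ik_sq (k := 1) (by norm_num)
  norm_num at h
  linarith

lemma Ik_neg_one : Ik (-1) = 0 := by
  rw [show (-1:ℝ) = -(1:ℝ) by norm_num, Ik_neg]; exact Ik_one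

lemma Ik_zero {k : ℝ} (hk : |k| ≤ 1) : Ik k = 0 := by
  rcases lt_or_eq_of_le hk with h | h
  · exact Ik_zero_of_lt h
  · rcases (abs_eq (by norm_num : (0:ℝ) ≤ 1)).mp h with rfl | rfl
    · exact Ik_one
    · exact Ik_neg_one

theorem stmt0 (a b : ℝ) (h1 : a ≥ |b|) (h2 : |b| > 0) :
    ∫ θ in (0:ℝ)..π, Real.log (a + b * Real.cos θ)
      = π * Real.log ((a + Real.sqrt (a ^ 2 - b ^ 2)) / 2) := by
  have hb : b ≠ 0 := by intro h; rw [h] at h2; simp at h2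
  have ha : 0 < a := lt_of_lt_of_le h2 h1
  have hab : 0 ≤ a^2 - b^2 := by nlinarith [sq_abs b, abs_nonneg b]
  set s : ℝ := Real.sqrt (a^2 - b^2) with hsdef
  have hs2 : s^2 = a^2 - b^2 := Real.sq_sqrt hab
  have hs0 : 0 ≤ s := Real.sqrt_nonneg _
  set r : ℝ := (a + s)/2 with hrdef
  have hr : 0 < r := by rw [hrdef]; positivity
  set k : ℝ := b/(2*r) with hkdef
  have hrk : r * (2*k) = b := by rw [hkdef]; field_simp
  have h2rs : 2*r = a + s := by rw [hrdef]; ring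
  have hr1k : r * (1 + k^2) = a := by
    rw [hkdef]
    field_simp
    linear_combination hs2 + (2*r - a + s) * h2rs
  have hpoint : ∀ θ : ℝ, a + b * Real.cos θ = r * (1 + k^2 + 2*k*Real.cos θ) := by
    intro θ
    calc a + b * Real.cos θ = r * (1 + k^2) + (r * (2*k)) * Real.cos θ := by
          rw [hr1k, hrk]
      _ = r * (1 + k^2 + 2*k*Real.cos θ) := by ring
  have hk1 : |k| ≤ 1 := by
    rw [hkdef, abs_div, abs_of_pos (by positivity : (0:ℝ) < 2*r)]
    rw [div_le_one (by positivity)]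
    calc |b| ≤ a := h1
      _ ≤ 2 * r := by rw [hrdef]; linarith
  have hIk : Ik k = 0 := Ik_zero hk1
  have hcongr : (∫ θ in (0:ℝ)..π, Real.log (a + b * Real.cos θ))
      = ∫ θ in (0:ℝ)..π, (Real.log r + Real.log (1 + k^2 + 2*k*Real.cos θ)) := by
    refine intervalIntegral.integral_congr_ae ?_
    filter_upwards [ae_ne_pi'] with θ hne hmem
    rw [Set.uIoc_of_le Real.pi_pos.le] at hmem
    have hcos := abs_cos_lt_one hmem.1 (lt_of_le_of_ne hmem.2 hne)
    have hA : 0 < 1 + k^2 + 2*k*Real.cos θ := by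
      rcases eq_or_ne k 0 with hk0 | hk0
      · rw [hk0]; norm_num
      · have hu : 0 < |k| := abs_pos.mpr hk0
        have h4 : -(|k| * |Real.cos θ|) ≤ k * Real.cos θ := by
          rw [← abs_mul]; exact neg_abs_le _
        nlinarith [sq_abs k, sq_nonneg (1 - |k|), mul_pos hu (sub_pos.mpr hcos)]
    rw [hpoint θ, Real.log_mul hr.ne' hA.ne']
  rw [hcongr, intervalIntegral.integral_add _root_.intervalIntegrable_const (ii_gen hk1)]
  have : (∫ θ in (0:ℝ)..π, Real.log (1 + k^2 + 2*k*Real.cos θ)) = Ik k := rfl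
  rw [this, hIk, intervalIntegral.integral_const]
  rw [hrdef]
  simp [smul_eq_mul]
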